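/- Let P be an irreducible transition matrix on a finite state space Ω, reversible with respect to π, with Dirichlet form E(h,h) = (1/2)Σ_{x,y} π(x)P(x,y)(h(x)−h(y))². For any nonzero nonnegative function u: Ω → [0,∞), let M = Var_π(u)/(4‖u‖₁) and û = (u − M)₊. Then the support of û has π-measure at most 4‖u‖₁²/Var_π(u), E(u,u) ≥ E(û,û), and Var_π(û) ≥ Var_π(u)/2. Consequently, E(u,u)/Var_π(u) ≥ (1/2)·Λ(4‖u‖₁²/Var_π(u)), where Λ(ε) = min{E(h,h) : Var_π(h)=1, π(supp(h)) ≤ ε}. -/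

import Mathlib

noncomputable section

variable {Ω : Type*} [Fintype Ω]

/-- Dirichlet form `E(h,h) = (1/2) Σ_{x,y} π(x) P(x,y) (h(x) − h(y))²`. -/
def dirForm (π : Ω → ℝ) (P : Matrix Ω Ω ℝ) (h : Ω → ℝ) : ℝ :=
  (1 / 2) * ∑ x, ∑ y, π x * P x y * (h x - h y) ^ 2

/-- `Var_π(h) = E_π[(h − E_π h)²]`. -/
def varPi (π : Ω → ℝ) (h : Ω → ℝ) : ℝ :=
  ∑ x, π x * (h x - ∑ y, π y * h y) ^ 2

/-- `‖u‖₁ = E_π[|u|]`. -/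
def l1Norm (π : Ω → ℝ) (u : Ω → ℝ) : ℝ := ∑ x, π x * |u x|

/-- `π(supp h)`. -/
def suppMass (π : Ω → ℝ) (h : Ω → ℝ) : ℝ := ∑ x, if h x ≠ 0 then π x else 0

/-- The spectral profile `Λ(ε) = inf{E(h,h) : Var_π(h)=1, π(supp h) ≤ ε}`. -/
def specProfile (π : Ω → ℝ) (P : Matrix Ω Ω ℝ) (ε : ℝ) : ℝ :=
  sInf {r : ℝ | ∃ h : Ω → ℝ, varPi π h = 1 ∧ suppMass π h ≤ ε ∧ r = dirForm π P h}

lemma varPi_eq (π : Ω → ℝ) (hπsum : ∑ x, π x = 1) (h : Ω → ℝ) :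
    varPi π h = (∑ x, π x * h x ^ 2) - (∑ x, π x * h x) ^ 2 := by
  unfold varPi
  set m := ∑ y, π y * h y with hm
  have key : ∀ x ∈ Finset.univ, π x * (h x - m) ^ 2
      = π x * h x ^ 2 - (2 * m) * (π x * h x) + m ^ 2 * π x := fun x _ => by ring
  rw [Finset.sum_congr rfl key, Finset.sum_add_distrib, Finset.sum_sub_distrib,
    ← Finset.mul_sum, ← Finset.mul_sum, hπsum]
  ring

lemma varPi_smul (π : Ω → ℝ) (c : ℝ) (h : Ω → ℝ) :
    varPi π (fun x => c * h x) = c ^ 2 * varPi π h := by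
  unfold varPi
  have hm : ∑ y, π y * (c * h y) = c * ∑ y, π y * h y := by
    rw [Finset.mul_sum]; exact Finset.sum_congr rfl fun x _ => by ring
  calc ∑ x, π x * (c * h x - ∑ y, π y * (c * h y)) ^ 2
      = ∑ x, c ^ 2 * (π x * (h x - ∑ y, π y * h y) ^ 2) := by
        rw [hm]; exact Finset.sum_congr rfl fun x _ => by ring
    _ = c ^ 2 * ∑ x, π x * (h x - ∑ y, π y * h y) ^ 2 := by rw [Finset.mul_sum]

lemma dirForm_smul (π : Ω → ℝ) (P : Matrix Ω Ω ℝ) (c : ℝ) (h : Ω → ℝ) :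
    dirForm π P (fun x => c * h x) = c ^ 2 * dirForm π P h := by
  unfold dirForm
  have key : ∀ x, ∑ y, π x * P x y * (c * h x - c * h y) ^ 2
      = c ^ 2 * ∑ y, π x * P x y * (h x - h y) ^ 2 := fun x => by
    rw [Finset.mul_sum]; exact Finset.sum_congr rfl fun y _ => by ring
  simp only [key, ← Finset.mul_sum]
  ring

lemma dirForm_nonneg (π : Ω → ℝ) (hπ : ∀ x, 0 ≤ π x) (P : Matrix Ω Ω ℝ)
    (hP0 : ∀ x y, 0 ≤ P x y) (h : Ω → ℝ) : 0 ≤ dirForm π P h := by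
  unfold dirForm
  apply mul_nonneg (by norm_num)
  apply Finset.sum_nonneg; intro x _
  apply Finset.sum_nonneg; intro y _
  exact mul_nonneg (mul_nonneg (hπ x) (hP0 x y)) (sq_nonneg _)

/-- the spectral-profile lemma of Goel–Montenegro–Tetali, Proposition 2.2.
For a reversible chain `(P, π)` and any nonzero nonnegative `u` (with `Var_π u > 0`), setting
`M = Var_π(u)/(4‖u‖₁)` and `uh = (u − M)₊`:
`π(supp uh) ≤ 4‖u‖₁²/Var_π(u)`, `E(u,u) ≥ E(uh,uh)`, `Var_π(uh) ≥ Var_π(u)/2`, and consequently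
`E(u,u)/Var_π(u) ≥ (1/2)·Λ(4‖u‖₁²/Var_π(u))`. -/
theorem stmt3 (π : Ω → ℝ) (hπpos : ∀ x, 0 < π x) (hπsum : ∑ x, π x = 1)
    (P : Matrix Ω Ω ℝ) (hP0 : ∀ x y, 0 ≤ P x y) (hP1 : ∀ x, ∑ y, P x y = 1)
    (hrev : ∀ x y, π x * P x y = π y * P y x)
    (u : Ω → ℝ) (hu0 : ∀ x, 0 ≤ u x) (hune : u ≠ 0) (huvar : 0 < varPi π u) :
    (suppMass π (fun x => max (u x - varPi π u / (4 * l1Norm π u)) 0)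
        ≤ 4 * (l1Norm π u) ^ 2 / varPi π u) ∧
    (dirForm π P (fun x => max (u x - varPi π u / (4 * l1Norm π u)) 0) ≤ dirForm π P u) ∧
    (varPi π u / 2 ≤ varPi π (fun x => max (u x - varPi π u / (4 * l1Norm π u)) 0)) ∧
    ((1 / 2) * specProfile π P (4 * (l1Norm π u) ^ 2 / varPi π u)
        ≤ dirForm π P u / varPi π u) := by
  set V := varPi π u with hV
  set L := l1Norm π u with hLdef
  set M := V / (4 * L) with hMdef
  set uh : Ω → ℝ := fun x => max (u x - M) 0 with huhdef
  -- basic positivity facts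
  obtain ⟨x₀, hx₀⟩ : ∃ x, u x ≠ 0 := by
    by_contra hc; push_neg at hc; exact hune (funext hc)
  have hL : 0 < L := by
    rw [hLdef]; unfold l1Norm
    exact Finset.sum_pos' (fun x _ => mul_nonneg (hπpos x).le (abs_nonneg _))
      ⟨x₀, Finset.mem_univ _, mul_pos (hπpos x₀) (abs_pos.mpr hx₀)⟩
  have hL0 : L ≠ 0 := hL.ne'
  have hV0 : V ≠ 0 := huvar.ne'
  have hM : 0 < M := by rw [hMdef]; exact div_pos huvar (mul_pos (by norm_num) hL)
  have huhle : ∀ x, uh x ≤ u x := fun x => max_le (by linarith [hM.le]) (hu0 x)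
  have huh0 : ∀ x, 0 ≤ uh x := fun x => le_max_right _ _
  have hEu : ∑ x, π x * u x = L := by
    rw [hLdef]; unfold l1Norm
    exact Finset.sum_congr rfl fun x _ => by rw [abs_of_nonneg (hu0 x)]
  -- Part 1: Markov
  have part1 : suppMass π uh ≤ 4 * L ^ 2 / V := by
    have key : suppMass π uh ≤ (∑ x, π x * u x) / M := by
      unfold suppMass
      rw [Finset.sum_div]
      apply Finset.sum_le_sum
      intro x _
      by_cases hx : uh x ≠ 0
      · rw [if_pos hx]
        have hux : M < u x := by
          by_contra hle; push_neg at hle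
          exact hx (max_eq_right (by linarith))
        rw [le_div_iff₀ hM]
        nlinarith [(hπpos x).le]
      · rw [if_neg hx]
        exact div_nonneg (mul_nonneg (hπpos x).le (hu0 x)) hM.le
    rw [hEu] at key
    calc suppMass π uh ≤ L / M := key
      _ = 4 * L ^ 2 / V := by rw [hMdef]; field_simp
  -- Part 2: Dirichlet form decreases
  have part2 : dirForm π P uh ≤ dirForm π P u := by
    unfold dirForm
    apply mul_le_mul_of_nonneg_left _ (by norm_num)
    apply Finset.sum_le_sum; intro x _
    apply Finset.sum_le_sum; intro y _
    apply mul_le_mul_of_nonneg_left _ (mul_nonneg (hπpos x).le (hP0 x y))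
    have habs : |uh x - uh y| ≤ |u x - u y| := by
      have h1 := abs_max_sub_max_le_abs (u x - M) (u y - M) 0
      have h2 : (u x - M) - (u y - M) = u x - u y := by ring
      rw [h2] at h1
      exact h1
    calc (uh x - uh y) ^ 2 = |uh x - uh y| ^ 2 := (sq_abs _).symm
      _ ≤ |u x - u y| ^ 2 := pow_le_pow_left₀ (abs_nonneg _) habs 2
      _ = (u x - u y) ^ 2 := sq_abs _
  -- Part 3: variance
  have hEuh_le : ∑ x, π x * uh x ≤ ∑ x, π x * u x :=
    Finset.sum_le_sum fun x _ => mul_le_mul_of_nonneg_left (huhle x) (hπpos x).le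
  have hEuh0 : 0 ≤ ∑ x, π x * uh x :=
    Finset.sum_nonneg fun x _ => mul_nonneg (hπpos x).le (huh0 x)
  have hsq : (∑ x, π x * uh x) ^ 2 ≤ (∑ x, π x * u x) ^ 2 :=
    pow_le_pow_left₀ hEuh0 hEuh_le 2
  have hpt : ∀ x, u x ^ 2 - uh x ^ 2 ≤ 2 * M * u x := by
    intro x
    rcases le_or_gt (u x) M with h | h
    · have hz : uh x = 0 := max_eq_right (by linarith)
      rw [hz]; nlinarith [hu0 x]
    · have hz : uh x = u x - M := max_eq_left (by linarith)
      rw [hz]; nlinarith [hu0 x, hM.le]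
  have hsqdiff : (∑ x, π x * u x ^ 2) - (∑ x, π x * uh x ^ 2) ≤ 2 * M * L := by
    have e : (∑ x, π x * u x ^ 2) - (∑ x, π x * uh x ^ 2)
        = ∑ x, π x * (u x ^ 2 - uh x ^ 2) := by
      rw [← Finset.sum_sub_distrib]
      exact Finset.sum_congr rfl fun x _ => by ring
    rw [e, ← hEu, Finset.mul_sum]
    apply Finset.sum_le_sum; intro x _
    calc π x * (u x ^ 2 - uh x ^ 2) ≤ π x * (2 * M * u x) :=
          mul_le_mul_of_nonneg_left (hpt x) (hπpos x).le
      _ = 2 * M * (π x * u x) := by ring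
  have h2ML : 2 * M * L = V / 2 := by
    rw [hMdef]; field_simp; ring
  have e1 : V = (∑ x, π x * u x ^ 2) - (∑ x, π x * u x) ^ 2 := by
    rw [hV]; exact varPi_eq π hπsum u
  have e2 : varPi π uh = (∑ x, π x * uh x ^ 2) - (∑ x, π x * uh x) ^ 2 :=
    varPi_eq π hπsum uh
  have part3 : V / 2 ≤ varPi π uh := by linarith
  -- Part 4: spectral profile bound
  have hW : 0 < varPi π uh := by linarith
  set c : ℝ := (Real.sqrt (varPi π uh))⁻¹ with hcdef
  have hc2 : c ^ 2 = (varPi π uh)⁻¹ := by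
    rw [hcdef, inv_pow, Real.sq_sqrt hW.le]
  have hc0 : c ≠ 0 := inv_ne_zero (Real.sqrt_pos.mpr hW).ne'
  have hvar1 : varPi π (fun x => c * uh x) = 1 := by
    rw [varPi_smul, hc2, inv_mul_cancel₀ hW.ne']
  have hsupp : suppMass π (fun x => c * uh x) = suppMass π uh := by
    unfold suppMass
    apply Finset.sum_congr rfl; intro x _
    by_cases hx : uh x = 0 <;> simp [hx, hc0]
  have hDu0 : 0 ≤ dirForm π P u :=
    dirForm_nonneg π (fun x => (hπpos x).le) P hP0 u
  have hdf : dirForm π P (fun x => c * uh x) = dirForm π P uh / varPi π uh := by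
    rw [dirForm_smul, hc2, inv_mul_eq_div]
  have hmem : dirForm π P (fun x => c * uh x) ∈
      {r : ℝ | ∃ h : Ω → ℝ, varPi π h = 1 ∧ suppMass π h ≤ 4 * L ^ 2 / V
        ∧ r = dirForm π P h} :=
    ⟨fun x => c * uh x, hvar1, by rw [hsupp]; exact part1, rfl⟩
  have hbdd : BddBelow {r : ℝ | ∃ h : Ω → ℝ, varPi π h = 1 ∧
      suppMass π h ≤ 4 * L ^ 2 / V ∧ r = dirForm π P h} := by
    refine ⟨0, fun r hr => ?_⟩
    obtain ⟨h, _, _, hrfl⟩ := hr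
    rw [hrfl]
    exact dirForm_nonneg π (fun x => (hπpos x).le) P hP0 h
  have hinf : specProfile π P (4 * L ^ 2 / V) ≤ dirForm π P uh / varPi π uh := by
    rw [← hdf]
    exact csInf_le hbdd hmem
  have h2 : dirForm π P uh / varPi π uh ≤ dirForm π P u / (V / 2) :=
    div_le_div₀ hDu0 part2 (by linarith) part3
  have h3 : (1 / 2) * (dirForm π P u / (V / 2)) = dirForm π P u / V := by
    field_simp
  exact ⟨part1, part2, part3, by linarith⟩

end
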